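/- Let p be a prime, R a perfect 𝔽_p-algebra, and n ≥ 1. There is a unique ring homomorphism α_n : ℤR/I^n → W_n(R) to the ring of p-typical Witt vectors of length n over R such that α_n sends the class of [r] to the Teichmüller representative of r for every r ∈ R; this α_n commutes with the projections of both rings onto R, and α_n is a ring isomorphism. -/

import Mathlib

set_option synthInstance.maxHeartbeats 1000000
set_option maxHeartbeats 1000000

open MonoidAlgebra

/-- `ℤR`: the monoid algebra over `ℤ` of the multiplicative monoid `(R, ·)`. -/
abbrev ZR (R : Type*) [CommRing R] : Type _ := MonoidAlgebra ℤ R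

/-- The canonical ring homomorphism `π : ℤR → R`, `Σ n_r [r] ↦ Σ n_r r`. -/
noncomputable def piHom (R : Type*) [CommRing R] : ZR R →+* R :=
  (MonoidAlgebra.lift ℤ R R (MonoidHom.id R)).toRingHom

/-- The ideal `I = ker (π : ℤR → R)`. -/
noncomputable def Iid (R : Type*) [CommRing R] : Ideal (ZR R) := RingHom.ker (piHom R)

namespace S14
open WittVector Finset

set_option linter.unusedSectionVars false

variable (p : ℕ) [hp : Fact p.Prime] (R : Type*) [CommRing R] [CharP R p]

theorem pi_of (r : R) : piHom R (of ℤ R r) = r := by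
  simp [piHom]

theorem pi_single (r : R) : piHom R (single r (1:ℤ)) = r := pi_of R r

theorem single_one_eq (b : ℤ) : (single (1:R) b : ZR R) = b • (1 : ZR R) := by
  rw [MonoidAlgebra.one_def, MonoidAlgebra.smul_single', mul_one]

theorem p_mem : (p : ZR R) ∈ Iid R := by
  simp [Iid, RingHom.mem_ker, map_natCast, CharP.cast_eq_zero]

theorem sub_mem (x : ZR R) : x - of ℤ R (piHom R x) ∈ Iid R := by
  simp [Iid, RingHom.mem_ker, pi_single]

theorem d_mem (a b : R) : of ℤ R a + of ℤ R b - of ℤ R (a + b) ∈ Iid R := by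
  simp [Iid, RingHom.mem_ker, pi_single]

theorem zero_of_mem_pow (k : ℕ) (hk : k ≠ 0) : of ℤ R 0 ∈ Iid R ^ k := by
  have h0 : of ℤ R 0 ∈ Iid R := by simp [Iid, RingHom.mem_ker, pi_single]
  have : (of ℤ R 0) ^ k ∈ Iid R ^ k := Ideal.pow_mem_pow h0 k
  rwa [← map_pow, zero_pow hk] at this

noncomputable def Bhom : ZR R →+* WittVector p R :=
  (MonoidAlgebra.lift ℤ (WittVector p R) R (WittVector.teichmuller p)).toRingHom

theorem Bhom_of (r : R) : Bhom p R (of ℤ R r) = teichmuller p r := by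
  simp [Bhom]

theorem coeff_zero_Bhom (z : ZR R) : (Bhom p R z).coeff 0 = piHom R z := by
  have key : (WittVector.ghostComponent (p := p) 0).comp (Bhom p R) = piHom R := by
    apply MonoidAlgebra.ringHom_ext
    · intro b
      rw [single_one_eq, map_zsmul, map_zsmul, map_one, map_one]
    · intro a
      have h2 : (single a (1:ℤ) : ZR R) = of ℤ R a := rfl
      rw [h2, RingHom.comp_apply, Bhom_of, pi_of]
      rw [ghostComponent_apply]
      simp [wittPolynomial_zero]
  calc (Bhom p R z).coeff 0 = WittVector.ghostComponent 0 (Bhom p R z) := by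
        rw [ghostComponent_apply]; simp [wittPolynomial_zero]
    _ = piHom R z := by rw [← RingHom.comp_apply, key]

theorem pI_sub (u : ZR R) : (p : ZR R) * (u - of ℤ R (piHom R u)) ∈ Iid R ^ 2 := by
  rw [sq]
  exact Ideal.mul_mem_mul (p_mem p R) (sub_mem R u)

theorem pd_mem (k : ℕ) (y₁ y₂ : R) :
    (p : ZR R) ^ k * (of ℤ R y₁ + of ℤ R y₂ - of ℤ R (y₁ + y₂)) ∈ Iid R ^ (k + 1) := by
  rw [pow_succ]
  exact Ideal.mul_mem_mul (Ideal.pow_mem_pow (p_mem p R) k) (d_mem R y₁ y₂)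

theorem pd1_mem (y₁ y₂ : R) :
    (p : ZR R) * (of ℤ R y₁ + of ℤ R y₂ - of ℤ R (y₁ + y₂)) ∈ Iid R ^ 2 := by
  rw [sq]
  exact Ideal.mul_mem_mul (p_mem p R) (d_mem R y₁ y₂)

/-- Key generator lemma. -/
theorem KG (hperf : Function.Bijective fun x : R => x ^ p) (a b : R) :
    ∃ y, (of ℤ R a + of ℤ R b - of ℤ R (a + b)) - (p : ZR R) * of ℤ R y ∈ Iid R ^ 2 := by
  obtain ⟨α, ha⟩ := hperf.surjective a
  obtain ⟨β, hb⟩ := hperf.surjective b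
  simp only at ha hb
  have hprime := hp.out
  set A := of ℤ R α with hA
  set B := of ℤ R β with hB
  set C := of ℤ R (α + β) with hC
  set δ : ZR R := A + B - C with hδ
  have hδI : δ ∈ Iid R := d_mem R α β
  -- expansion 1
  obtain ⟨U₀, hU⟩ := exists_add_pow_prime_eq hprime A B
  set U : ZR R := A * B * U₀ with hUdef
  -- expansion 2
  have hV := add_pow_prime_eq hprime δ C
  set V : ZR R := δ * C * ∑ k ∈ Finset.Ioo 0 p, δ ^ (k - 1) * C ^ (p - k - 1) * ((p.choose k / p : ℕ) : ZR R)
    with hVdef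
  have hVI : V ∈ Iid R := by
    exact Ideal.mul_mem_right _ _ (Ideal.mul_mem_right _ _ hδI)
  have hδp : δ ^ p ∈ Iid R ^ 2 := by
    have h2 : 2 ≤ p := hprime.two_le
    have : δ ^ p = δ ^ 2 * δ ^ (p - 2) := by rw [← pow_add]; congr 1; omega
    rw [this]
    exact Ideal.mul_mem_right _ _ (Ideal.pow_mem_pow hδI 2)
  have hApow : A ^ p = of ℤ R a := by rw [hA, ← map_pow, ha]
  have hBpow : B ^ p = of ℤ R b := by rw [hB, ← map_pow, hb]
  have hCpow : C ^ p = of ℤ R (a + b) := by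
    rw [hC, ← map_pow, add_pow_char, ha, hb]
  -- main identity: d(a,b) = δ^p + p*(V - U)
  have main : of ℤ R a + of ℤ R b - of ℤ R (a + b)
      = δ ^ p + (p : ZR R) * (V - U) := by
    have e1 : (A + B) ^ p = of ℤ R a + of ℤ R b + (p : ZR R) * U := by
      rw [hU, hApow, hBpow, hUdef]; ring
    have e2 : (δ + C) ^ p = δ ^ p + of ℤ R (a + b) + (p : ZR R) * V := by
      rw [hV, hCpow, hVdef]; ring
    have e3 : A + B = δ + C := by rw [hδ]; ring
    rw [e3] at e1
    rw [e2] at e1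
    linear_combination -e1
  refine ⟨piHom R (V - U), ?_⟩
  have : (of ℤ R a + of ℤ R b - of ℤ R (a + b)) - (p : ZR R) * of ℤ R (piHom R (V - U))
      = δ ^ p + (p : ZR R) * ((V - U) - of ℤ R (piHom R (V - U))) := by
    rw [main]; ring
  rw [this]
  exact Ideal.add_mem _ hδp (pI_sub p R _)

/-- additivity helper -/
theorem ADD {z₁ z₂ : ZR R} {y₁ y₂ : R}
    (h₁ : z₁ - (p : ZR R) * of ℤ R y₁ ∈ Iid R ^ 2)
    (h₂ : z₂ - (p : ZR R) * of ℤ R y₂ ∈ Iid R ^ 2) :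
    (z₁ + z₂) - (p : ZR R) * of ℤ R (y₁ + y₂) ∈ Iid R ^ 2 := by
  have h₃ := pd1_mem p R y₁ y₂
  have : (z₁ + z₂) - (p : ZR R) * of ℤ R (y₁ + y₂)
      = (z₁ - (p : ZR R) * of ℤ R y₁) + (z₂ - (p : ZR R) * of ℤ R y₂)
        + (p : ZR R) * (of ℤ R y₁ + of ℤ R y₂ - of ℤ R (y₁ + y₂)) := by ring
  rw [this]
  exact Ideal.add_mem _ (Ideal.add_mem _ h₁ h₂) h₃

theorem NEG {z : ZR R} {y : R} (h : z - (p : ZR R) * of ℤ R y ∈ Iid R ^ 2) :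
    (-z) - (p : ZR R) * of ℤ R (-y) ∈ Iid R ^ 2 := by
  have h2 : (p : ZR R) * (of ℤ R y + of ℤ R (-y)) ∈ Iid R ^ 2 := by
    rw [sq]
    refine Ideal.mul_mem_mul (p_mem p R) ?_
    simp [Iid, RingHom.mem_ker, pi_single]
  have : (-z) - (p : ZR R) * of ℤ R (-y)
      = -(z - (p : ZR R) * of ℤ R y) - (p : ZR R) * (of ℤ R y + of ℤ R (-y)) := by ring
  rw [this]
  exact Ideal.sub_mem _ (neg_mem h) h2

def Qprop (x : ZR R) : Prop :=
  ∃ y, x - of ℤ R (piHom R x) - (p : ZR R) * of ℤ R y ∈ Iid R ^ 2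

theorem hp0of0 : (p : ZR R) * of ℤ R 0 ∈ Iid R ^ 2 := by
  rw [sq]
  exact Ideal.mul_mem_mul (p_mem p R) (by simp [Iid, RingHom.mem_ker, pi_single])

theorem Qzero : Qprop p R 0 := by
  refine ⟨0, ?_⟩
  have h0 : of ℤ R 0 ∈ Iid R ^ 2 := zero_of_mem_pow R 2 (by norm_num)
  have : (0 : ZR R) - of ℤ R (piHom R 0) - (p : ZR R) * of ℤ R 0
      = -(of ℤ R 0) - (p : ZR R) * of ℤ R 0 := by rw [map_zero]; ring
  rw [this]
  exact Ideal.sub_mem _ (neg_mem h0) (hp0of0 p R)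

theorem Qof (a : R) : Qprop p R (of ℤ R a) := by
  refine ⟨0, ?_⟩
  rw [pi_of]
  simpa using neg_mem (hp0of0 p R)

theorem Qadd (hperf : Function.Bijective fun x : R => x ^ p) {x₁ x₂ : ZR R}
    (h₁ : Qprop p R x₁) (h₂ : Qprop p R x₂) :
    Qprop p R (x₁ + x₂) := by
  obtain ⟨y₁, hy₁⟩ := h₁
  obtain ⟨y₂, hy₂⟩ := h₂
  obtain ⟨y₃, hy₃⟩ := KG p R hperf (piHom R x₁) (piHom R x₂)
  refine ⟨y₁ + y₂ + y₃, ?_⟩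
  have hsum := ADD p R (ADD p R hy₁ hy₂) hy₃
  have : (x₁ + x₂) - of ℤ R (piHom R (x₁ + x₂)) - (p : ZR R) * of ℤ R (y₁ + y₂ + y₃)
      = ((x₁ - of ℤ R (piHom R x₁) - (p:ZR R) * of ℤ R y₁)
          + (x₂ - of ℤ R (piHom R x₂) - (p:ZR R) * of ℤ R y₂)
          + ((of ℤ R (piHom R x₁) + of ℤ R (piHom R x₂) - of ℤ R (piHom R x₁ + piHom R x₂))
            - (p:ZR R) * of ℤ R y₃))
        + ((p:ZR R) * (of ℤ R y₁ + of ℤ R y₂ - of ℤ R (y₁ + y₂)))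
        + ((p:ZR R) * (of ℤ R (y₁+y₂) + of ℤ R y₃ - of ℤ R (y₁ + y₂ + y₃))) := by
    rw [map_add]; ring
  rw [this]
  have t1 := pd1_mem p R y₁ y₂
  have t2 := pd1_mem p R (y₁+y₂) y₃
  exact Ideal.add_mem _ (Ideal.add_mem _
    (Ideal.add_mem _ (Ideal.add_mem _ hy₁ hy₂) hy₃) t1) t2

theorem Qneg (hperf : Function.Bijective fun x : R => x ^ p) {x : ZR R}
    (h : Qprop p R x) : Qprop p R (-x) := by
  obtain ⟨y, hy⟩ := h
  obtain ⟨y₁, hy₁⟩ := KG p R hperf (piHom R x) (-piHom R x)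
  refine ⟨-y + -y₁, ?_⟩
  have h0 : of ℤ R 0 ∈ Iid R ^ 2 := zero_of_mem_pow R 2 (by norm_num)
  have hnz := NEG p R hy
  -- hy₁ : (of πx + of(-πx) - of (πx + -πx)) - p of y₁ ∈ I²
  have hne : (-(of ℤ R (piHom R x) + of ℤ R (-piHom R x))) - (p:ZR R) * of ℤ R (-y₁)
      ∈ Iid R ^ 2 := by
    have hy₁' : (of ℤ R (piHom R x) + of ℤ R (-piHom R x)) - (p : ZR R) * of ℤ R y₁
        ∈ Iid R ^ 2 := by
      have : (of ℤ R (piHom R x) + of ℤ R (-piHom R x)) - (p : ZR R) * of ℤ R y₁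
          = ((of ℤ R (piHom R x) + of ℤ R (-piHom R x) - of ℤ R (piHom R x + -piHom R x))
              - (p : ZR R) * of ℤ R y₁) + of ℤ R 0 := by
        rw [add_neg_cancel]; ring
      rw [this]
      exact Ideal.add_mem _ hy₁ h0
    exact NEG p R hy₁'
  have hpd : (p:ZR R) * (of ℤ R (-y) + of ℤ R (-y₁) - of ℤ R (-y + -y₁)) ∈ Iid R ^ 2 :=
    pd1_mem p R (-y) (-y₁)
  have : (-x) - of ℤ R (piHom R (-x)) - (p : ZR R) * of ℤ R (-y + -y₁)
      = (-(x - of ℤ R (piHom R x)) - (p:ZR R) * of ℤ R (-y))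
        + ((-(of ℤ R (piHom R x) + of ℤ R (-piHom R x))) - (p:ZR R) * of ℤ R (-y₁))
        + ((p:ZR R) * (of ℤ R (-y) + of ℤ R (-y₁) - of ℤ R (-y + -y₁))) := by
    rw [map_neg]; ring
  rw [this]
  exact Ideal.add_mem _ (Ideal.add_mem _ hnz hne) hpd

theorem Qsmul (hperf : Function.Bijective fun x : R => x ^ p) (b : ℤ) (a : R) :
    Qprop p R (b • of ℤ R a) := by
  induction b using Int.induction_on with
  | zero => simpa using Qzero p R
  | succ k ih =>
    have : ((k : ℤ) + 1) • of ℤ R a = (k : ℤ) • of ℤ R a + of ℤ R a := by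
      rw [add_smul, one_smul]
    rw [this]
    exact Qadd p R hperf ih (Qof p R a)
  | pred k ih =>
    have : (-(k : ℤ) - 1) • of ℤ R a = (-(k : ℤ)) • of ℤ R a + -(of ℤ R a) := by
      rw [sub_smul, one_smul]; ring
    rw [this]
    exact Qadd p R hperf ih (Qneg p R hperf (Qof p R a))

theorem Qall (hperf : Function.Bijective fun x : R => x ^ p) (x : ZR R) : Qprop p R x := by
  induction x using MonoidAlgebra.induction with
  | zero => exact Qzero p R
  | single_add a b f _ _ ihf =>
    refine Qadd p R hperf ?_ ihf
    have hof : (single a b : ZR R) = b • of ℤ R a := by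
      rw [MonoidAlgebra.of_apply, MonoidAlgebra.smul_single', mul_one]
    show Qprop p R (single a b : ZR R)
    rw [hof]
    exact Qsmul p R hperf b a

theorem KL1 (hperf : Function.Bijective fun x : R => x ^ p) {z : ZR R} (hz : z ∈ Iid R) :
    ∃ y, z - (p : ZR R) * of ℤ R y ∈ Iid R ^ 2 := by
  obtain ⟨y, hy⟩ := Qall p R hperf z
  refine ⟨y, ?_⟩
  have hπ : piHom R z = 0 := hz
  rw [hπ] at hy
  have h0 : of ℤ R 0 ∈ Iid R ^ 2 := zero_of_mem_pow R 2 (by norm_num)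
  have : z - (p : ZR R) * of ℤ R y
      = (z - of ℤ R 0 - (p:ZR R) * of ℤ R y) + of ℤ R 0 := by ring
  rw [this]
  exact Ideal.add_mem _ hy h0

theorem KLn (hperf : Function.Bijective fun x : R => x ^ p) :
    ∀ n : ℕ, ∀ z ∈ Iid R ^ n, ∃ y, z - (p : ZR R) ^ n * of ℤ R y ∈ Iid R ^ (n + 1) := by
  intro n
  induction n with
  | zero =>
    intro z _
    refine ⟨piHom R z, ?_⟩
    rw [pow_zero, one_mul, pow_one]
    exact sub_mem R z
  | succ n ih =>
    intro z hz
    rw [pow_succ] at hz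
    refine Submodule.mul_induction_on hz ?_ ?_
    · intro a ha b hb
      obtain ⟨c, hc⟩ := ih a ha
      obtain ⟨y, hy⟩ := KL1 p R hperf (Ideal.mul_mem_left _ (of ℤ R c) hb)
      refine ⟨y, ?_⟩
      have expand : a * b - (p : ZR R) ^ (n + 1) * of ℤ R y
          = (a - (p : ZR R) ^ n * of ℤ R c) * b
            + (p : ZR R) ^ n * (of ℤ R c * b - (p : ZR R) * of ℤ R y) := by ring
      rw [expand]
      refine Ideal.add_mem _ ?_ ?_
      · -- ∈ I^(n+1) * I = I^(n+2)
        have := Ideal.mul_mem_mul hc hb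
        rwa [← pow_succ] at this
      · -- p^n * I² ⊆ I^n * I² = I^(n+2)
        have := Ideal.mul_mem_mul (Ideal.pow_mem_pow (p_mem p R) n) hy
        rwa [← pow_add] at this
    · intro x y ⟨c₁, hc₁⟩ ⟨c₂, hc₂⟩
      refine ⟨c₁ + c₂, ?_⟩
      have expand : (x + y) - (p : ZR R) ^ (n + 1) * of ℤ R (c₁ + c₂)
          = (x - (p : ZR R) ^ (n + 1) * of ℤ R c₁) + (y - (p : ZR R) ^ (n + 1) * of ℤ R c₂)
            + (p : ZR R) ^ (n + 1)
              * (of ℤ R c₁ + of ℤ R c₂ - of ℤ R (c₁ + c₂)) := by ring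
      rw [expand]
      exact Ideal.add_mem _ (Ideal.add_mem _ hc₁ hc₂) (pd_mem p R (n+1) c₁ c₂)

theorem KEY (hperf : Function.Bijective fun x : R => x ^ p) (n : ℕ) (x : ZR R) :
    ∃ y : ℕ → R, x - ∑ i ∈ Finset.range n, (p : ZR R) ^ i * of ℤ R (y i) ∈ Iid R ^ n := by
  induction n with
  | zero => exact ⟨fun _ => 0, by simp⟩
  | succ n ih =>
    obtain ⟨y, hy⟩ := ih
    obtain ⟨c, hc⟩ := KLn p R hperf n _ hy
    refine ⟨fun i => if i = n then c else y i, ?_⟩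
    rw [Finset.sum_range_succ]
    have hsum : ∑ i ∈ Finset.range n, (p : ZR R) ^ i * of ℤ R (if i = n then c else y i)
        = ∑ i ∈ Finset.range n, (p : ZR R) ^ i * of ℤ R (y i) := by
      refine Finset.sum_congr rfl fun i hi => ?_
      rw [if_neg (Finset.mem_range.mp hi).ne]
    rw [hsum, show (fun i => if i = n then c else y i) n = c from if_pos rfl]
    have : x - (∑ i ∈ Finset.range n, (p : ZR R) ^ i * of ℤ R (y i) + (p:ZR R) ^ n * of ℤ R c)
        = (x - ∑ i ∈ Finset.range n, (p : ZR R) ^ i * of ℤ R (y i))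
          - (p:ZR R) ^ n * of ℤ R c := by ring
    rw [this]
    exact hc

/-! ### Witt vector side -/

theorem ghost0_coeff (x : WittVector p R) : WittVector.ghostComponent 0 x = x.coeff 0 := by
  rw [ghostComponent_apply]
  simp [wittPolynomial_zero]

theorem coeff_iterate_verschiebung_lt (k : ℕ) (x : WittVector p R) :
    ∀ i < k, (verschiebung^[k] x).coeff i = 0 := by
  induction k generalizing x with
  | zero => omega
  | succ k ih =>
    intro i hi
    rw [Function.iterate_succ_apply']
    cases i with
    | zero => exact verschiebung_coeff_zero _
    | succ m => rw [verschiebung_coeff_succ]; exact ih _ m (by omega)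

theorem exists_iterate_verschiebung (k : ℕ) (x : WittVector p R)
    (h : ∀ i < k, x.coeff i = 0) : ∃ y, x = verschiebung^[k] y := by
  induction k generalizing x with
  | zero => exact ⟨x, rfl⟩
  | succ k ih =>
    have hV : verschiebung (WittVector.mk p (fun i => x.coeff (i+1))) = x := by
      ext j
      cases j with
      | zero => rw [verschiebung_coeff_zero, h 0 (Nat.succ_pos k)]
      | succ m => rw [verschiebung_coeff_succ]; rfl
    obtain ⟨y, hy⟩ := ih (WittVector.mk p (fun i => x.coeff (i+1)))
      (fun i hi => h (i+1) (by omega))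
    refine ⟨y, ?_⟩
    rw [← hV, hy]
    exact (Function.iterate_succ_apply' _ k y).symm

theorem mul_coeff_vanish {j : ℕ} {x y : WittVector p R}
    (hx : ∀ i < j, x.coeff i = 0) (hy0 : y.coeff 0 = 0) :
    ∀ i < j + 1, (x * y).coeff i = 0 := by
  obtain ⟨x', rfl⟩ := exists_iterate_verschiebung p R j x hx
  obtain ⟨y', rfl⟩ := exists_iterate_verschiebung p R 1 y
    (by intro i hi; interval_cases i; exact hy0)
  intro i hi
  rw [iterate_verschiebung_mul]
  exact coeff_iterate_verschiebung_lt p R _ _ i (by omega)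

theorem B_mem_ker (k : ℕ) :
    ∀ z ∈ Iid R ^ k,
      Bhom p R z ∈ RingHom.ker (WittVector.truncate (p := p) (R := R) k) := by
  induction k with
  | zero =>
    intro z _
    rw [WittVector.mem_ker_truncate]
    omega
  | succ k ih =>
    intro z hz
    rw [pow_succ] at hz
    refine Submodule.mul_induction_on hz ?_ ?_
    · intro a ha b hb
      rw [map_mul, WittVector.mem_ker_truncate]
      refine mul_coeff_vanish p R ?_ ?_
      · exact (WittVector.mem_ker_truncate _ _).mp (ih a ha)
      · rw [coeff_zero_Bhom]; exact hb
    · intro u v hu hv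
      rw [map_add]
      exact Ideal.add_mem _ hu hv

theorem frob_teich (r : R) :
    WittVector.frobenius (teichmuller p r) = teichmuller p (r ^ p) := by
  rw [frobenius_eq_map_frobenius, map_teichmuller, frobenius_def]

theorem coeff0_model (m : ℕ) (y : ℕ → R) :
    (∑ i ∈ Finset.range (m + 1), (p : WittVector p R) ^ i * teichmuller p (y i)).coeff 0
      = y 0 := by
  rw [← ghost0_coeff, map_sum]
  rw [Finset.sum_eq_single 0]
  · simp [ghostComponent_teichmuller]
  · intro i _ hi
    obtain ⟨j, rfl⟩ := Nat.exists_eq_succ_of_ne_zero hi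
    rw [map_mul, map_pow, map_natCast, CharP.cast_eq_zero R p]
    rw [zero_pow (Nat.succ_ne_zero j), zero_mul]
  · intro h
    exact absurd (Finset.mem_range.mpr (Nat.succ_pos m)) h

theorem model_shift (m : ℕ) (y : ℕ → R) :
    ∑ i ∈ Finset.range (m + 1), (p : WittVector p R) ^ i * teichmuller p (y i)
      = teichmuller p (y 0)
        + verschiebung (∑ i ∈ Finset.range m,
            (p : WittVector p R) ^ i * teichmuller p (y (i + 1) ^ p)) := by
  rw [Finset.sum_range_succ']
  have hterm : ∀ i, (p : WittVector p R) ^ (i+1) * teichmuller p (y (i+1))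
      = (p : WittVector p R) * ((p : WittVector p R) ^ i * teichmuller p (y (i+1))) := by
    intro i; rw [pow_succ']; ring
  have : ∑ i ∈ Finset.range m, (p : WittVector p R) ^ (i+1) * teichmuller p (y (i+1))
      = (p : WittVector p R) * ∑ i ∈ Finset.range m,
          (p : WittVector p R) ^ i * teichmuller p (y (i+1)) := by
    rw [Finset.mul_sum]
    exact Finset.sum_congr rfl fun i _ => hterm i
  rw [this, pow_zero, one_mul, add_comm]
  congr 1
  -- p * t = V (F t) and F t = model of y(·+1)^p
  set t := ∑ i ∈ Finset.range m, (p : WittVector p R) ^ i * teichmuller p (y (i+1)) with ht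
  have hpt : (p : WittVector p R) * t = verschiebung (WittVector.frobenius t) := by
    rw [verschiebung_frobenius, mul_comm]
  rw [hpt]
  congr 1
  rw [ht, map_sum]
  refine Finset.sum_congr rfl fun i _ => ?_
  rw [map_mul, map_pow, map_natCast, frob_teich]

theorem trunc_V_congr (m : ℕ) {u v : WittVector p R}
    (h : WittVector.truncate m u = WittVector.truncate m v) (a : WittVector p R) :
    WittVector.truncate (m+1) (a + verschiebung u)
      = WittVector.truncate (m+1) (a + verschiebung v) := by
  rw [← sub_eq_zero, ← map_sub]
  have hmem : (a + verschiebung u) - (a + verschiebung v) = verschiebung (u - v) := by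
    rw [map_sub]; ring
  rw [hmem, ← RingHom.mem_ker, WittVector.mem_ker_truncate]
  intro i hi
  cases i with
  | zero => exact verschiebung_coeff_zero _
  | succ j =>
    rw [verschiebung_coeff_succ]
    have : u - v ∈ RingHom.ker (WittVector.truncate (p := p) m) := by
      rw [RingHom.mem_ker, map_sub, h, sub_self]
    exact (WittVector.mem_ker_truncate _ _).mp this j (by omega)

theorem inj_lemma (hperf : Function.Bijective fun x : R => x ^ p) :
    ∀ n (y : ℕ → R),
      WittVector.truncate n
        (∑ i ∈ Finset.range n, (p : WittVector p R) ^ i * teichmuller p (y i)) = 0 →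
      ∀ i < n, y i = 0 := by
  intro n
  induction n with
  | zero => omega
  | succ n ih =>
    intro y h0
    set s := ∑ i ∈ Finset.range (n+1), (p : WittVector p R) ^ i * teichmuller p (y i) with hs
    have hker : s ∈ RingHom.ker (WittVector.truncate (p := p) (n+1)) := by
      rw [RingHom.mem_ker]; exact h0
    have hy0 : y 0 = 0 := by
      have := (WittVector.mem_ker_truncate _ _).mp hker 0 (by omega)
      rwa [hs, coeff0_model] at this
    have hshift := model_shift p R n y
    set t := ∑ i ∈ Finset.range n, (p : WittVector p R) ^ i * teichmuller p (y (i+1) ^ p)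
      with ht
    have hs' : s = verschiebung t := by
      rw [hs, hshift, hy0, teichmuller_zero, zero_add]
    have htker : WittVector.truncate n t = 0 := by
      rw [← RingHom.mem_ker, WittVector.mem_ker_truncate]
      intro i hi
      have := (WittVector.mem_ker_truncate _ _).mp hker (i+1) (by omega)
      rwa [hs', verschiebung_coeff_succ] at this
    have hzero := ih (fun i => y (i+1) ^ p) htker
    intro i hi
    cases i with
    | zero => exact hy0
    | succ j =>
      have hpj : y (j+1) ^ p = 0 := hzero j (by omega)
      have : (fun x : R => x ^ p) (y (j+1)) = (fun x : R => x ^ p) 0 := by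
        simpa [zero_pow hp.out.ne_zero] using hpj
      exact hperf.injective this

theorem surj_lemma (hperf : Function.Bijective fun x : R => x ^ p) :
    ∀ n (w : WittVector p R), ∃ y : ℕ → R,
      WittVector.truncate n
        (∑ i ∈ Finset.range n, (p : WittVector p R) ^ i * teichmuller p (y i))
      = WittVector.truncate n w := by
  intro n
  induction n with
  | zero =>
    intro w
    refine ⟨fun _ => 0, ?_⟩
    ext i
    exact absurd i.2 (Nat.not_lt_zero _)
  | succ n ih =>
    intro w
    set w0 := w.coeff 0 with hw0
    set u := WittVector.mk p (fun i => (w - teichmuller p w0).coeff (i+1)) with hu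
    have hVu : verschiebung u = w - teichmuller p w0 := by
      ext j
      cases j with
      | zero =>
        rw [verschiebung_coeff_zero]
        have : ((w - teichmuller p w0).coeff 0 : R)
            = WittVector.ghostComponent 0 (w - teichmuller p w0) := (ghost0_coeff p R _).symm
        rw [this, map_sub, ghost0_coeff, ghost0_coeff, teichmuller_coeff_zero, sub_self]
      | succ m => rw [verschiebung_coeff_succ]; rfl
    obtain ⟨z, hz⟩ := ih u
    set rt : R → R := fun x => (Equiv.ofBijective _ hperf).symm x with hrt
    have hrtpow : ∀ x : R, (rt x) ^ p = x := fun x =>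
      (Equiv.ofBijective _ hperf).apply_symm_apply x
    set y : ℕ → R := fun i => match i with
      | 0 => w0
      | (j+1) => rt (z j) with hy
    have hy0 : y 0 = w0 := rfl
    have hshift := model_shift p R n y
    have hmod : ∀ i, y (i+1) ^ p = z i := fun i => hrtpow (z i)
    have hsum : ∑ i ∈ Finset.range n, (p : WittVector p R) ^ i * teichmuller p (y (i+1) ^ p)
        = ∑ i ∈ Finset.range n, (p : WittVector p R) ^ i * teichmuller p (z i) := by
      refine Finset.sum_congr rfl fun i _ => ?_
      rw [hmod]
    refine ⟨y, ?_⟩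
    rw [hshift, hy0, hsum]
    have hw : w = teichmuller p w0 + verschiebung u := by rw [hVu]; ring
    rw [hw]
    exact trunc_V_congr p R n hz (teichmuller p w0)

theorem Bmodel (m : ℕ) (y : ℕ → R) :
    Bhom p R (∑ i ∈ Finset.range m, (p : ZR R) ^ i * of ℤ R (y i))
      = ∑ i ∈ Finset.range m, (p : WittVector p R) ^ i * teichmuller p (y i) := by
  rw [map_sum]
  refine Finset.sum_congr rfl fun i _ => ?_
  rw [map_mul, map_pow, map_natCast, Bhom_of]

end S14

/-- The projection `ℤR/I^n → R` induced by `π` (for `n ≠ 0`, using `I^n ≤ I`). -/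
noncomputable def piBarN (R : Type*) [CommRing R] (n : ℕ) (hn : n ≠ 0) :
    ZR R ⧸ Iid R ^ n →+* R :=
  Ideal.Quotient.lift _ (piHom R)
    (fun _ ha => RingHom.mem_ker.mp (Ideal.pow_le_self hn ha))

/-- Let `p` be a prime, `R` a perfect `𝔽_p`-algebra and `n ≥ 1`. There is a
unique ring homomorphism `α_n : ℤR/I^n → W_n(R)` to the length-`n` truncated `p`-typical Witt
vectors sending the class of `[r]` to the Teichmüller representative of `r` for every `r ∈ R`;
moreover `α_n` commutes with the projections of both rings onto `R` and is a ring
isomorphism. -/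
theorem statement14 (p : ℕ) [Fact p.Prime] (R : Type*) [CommRing R] [CharP R p]
    (hperf : Function.Bijective fun x : R => x ^ p) (n : ℕ) (hn : 1 ≤ n) :
    (∃! α : ZR R ⧸ Iid R ^ n →+* TruncatedWittVector p n R,
      ∀ r : R, α (Ideal.Quotient.mk _ (of ℤ R r)) =
        WittVector.truncate n (WittVector.teichmuller p r)) ∧
    ∀ α : ZR R ⧸ Iid R ^ n →+* TruncatedWittVector p n R,
      (∀ r : R, α (Ideal.Quotient.mk _ (of ℤ R r)) =
        WittVector.truncate n (WittVector.teichmuller p r)) →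
      (∀ x, (α x).coeff ⟨0, hn⟩ = piBarN R n (Nat.one_le_iff_ne_zero.mp hn) x) ∧
      Function.Bijective α := by
  classical
  have hn0 : n ≠ 0 := Nat.one_le_iff_ne_zero.mp hn
  set β : ZR R →+* TruncatedWittVector p n R :=
    (WittVector.truncate n).comp (S14.Bhom p R) with hβ
  have hker : ∀ z ∈ Iid R ^ n, β z = 0 := by
    intro z hz
    have := S14.B_mem_ker p R n z hz
    rw [RingHom.mem_ker] at this
    rw [hβ, RingHom.comp_apply, this]
  set α₀ : ZR R ⧸ Iid R ^ n →+* TruncatedWittVector p n R :=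
    Ideal.Quotient.lift _ β hker with hα₀
  have hprop : ∀ r : R, α₀ (Ideal.Quotient.mk _ (of ℤ R r)) =
      WittVector.truncate n (WittVector.teichmuller p r) := by
    intro r
    rw [hα₀, Ideal.Quotient.lift_mk, hβ, RingHom.comp_apply, S14.Bhom_of]
  have huniq : ∀ α : ZR R ⧸ Iid R ^ n →+* TruncatedWittVector p n R,
      (∀ r : R, α (Ideal.Quotient.mk _ (of ℤ R r)) =
        WittVector.truncate n (WittVector.teichmuller p r)) → α = α₀ := by
    intro α hα
    apply Ideal.Quotient.ringHom_ext
    apply MonoidAlgebra.ringHom_ext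
    · intro b
      rw [RingHom.comp_apply, RingHom.comp_apply, S14.single_one_eq, map_zsmul, map_zsmul]
      simp
    · intro a
      have h1 : (single a (1:ℤ) : ZR R) = of ℤ R a := rfl
      rw [RingHom.comp_apply, RingHom.comp_apply, h1, hα a, hprop a]
  refine ⟨⟨α₀, hprop, huniq⟩, ?_⟩
  intro α hα
  rw [huniq α hα]
  constructor
  · -- projection compatibility
    intro x
    obtain ⟨z, rfl⟩ := Ideal.Quotient.mk_surjective x
    rw [hα₀, Ideal.Quotient.lift_mk, hβ, RingHom.comp_apply]
    rw [WittVector.coeff_truncate]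
    show (S14.Bhom p R z).coeff 0 = _
    rw [S14.coeff_zero_Bhom]
    rw [piBarN, Ideal.Quotient.lift_mk]
  · constructor
    · -- injective
      rw [injective_iff_map_eq_zero]
      intro x hx
      obtain ⟨z, rfl⟩ := Ideal.Quotient.mk_surjective x
      obtain ⟨y, hy⟩ := S14.KEY p R hperf n z
      set S : ZR R := ∑ i ∈ Finset.range n, (p : ZR R) ^ i * of ℤ R (y i) with hS
      have hmkeq : Ideal.Quotient.mk (Iid R ^ n) z = Ideal.Quotient.mk _ S :=
        (Ideal.Quotient.mk_eq_mk_iff_sub_mem z S).mpr hy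
      have hS0 : WittVector.truncate n
          (∑ i ∈ Finset.range n, (p : WittVector p R) ^ i * WittVector.teichmuller p (y i))
            = 0 := by
        rw [← S14.Bmodel]
        have : α₀ (Ideal.Quotient.mk _ S) = 0 := by rw [← hmkeq]; exact hx
        rw [hα₀, Ideal.Quotient.lift_mk, hβ, RingHom.comp_apply] at this
        exact this
      have hy0 := S14.inj_lemma p R hperf n y hS0
      have hSmem : S ∈ Iid R ^ n := by
        rw [hS]
        refine Ideal.sum_mem _ fun i hi => ?_
        rw [hy0 i (Finset.mem_range.mp hi)]
        exact Ideal.mul_mem_left _ _ (S14.zero_of_mem_pow R n hn0)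
      rw [hmkeq, Ideal.Quotient.eq_zero_iff_mem]
      exact hSmem
    · -- surjective
      intro t
      obtain ⟨w, rfl⟩ := WittVector.truncate_surjective p n R t
      obtain ⟨y, hy⟩ := S14.surj_lemma p R hperf n w
      refine ⟨Ideal.Quotient.mk _ (∑ i ∈ Finset.range n, (p : ZR R) ^ i * of ℤ R (y i)), ?_⟩
      rw [hα₀, Ideal.Quotient.lift_mk, hβ, RingHom.comp_apply, S14.Bmodel]
      exact hy
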